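/- Let Λ be an Artin algebra with r² = 0 and let S be a simple Λ-module of finite projective dimension. Then Ext¹_Λ(S, S) = 0. -/

import Mathlib

open CategoryTheory

section ARPrelude

variable (Λ : Type) [Ring Λ]

/-- The Jacobson radical of `Λ` squares to zero. -/
def RadicalSquareZero : Prop :=
  ∀ a ∈ Ideal.jacobson (⊥ : Ideal Λ), ∀ b ∈ Ideal.jacobson (⊥ : Ideal Λ), a * b = 0

section ModDefs

variable (M : Type) [AddCommGroup M] [Module Λ M]

/-- The submodule `rM` of `M`, where `r` is the Jacobson radical of `Λ`. -/
def radSub : Submodule Λ M :=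
  Submodule.span Λ {x : M | ∃ a ∈ Ideal.jacobson (⊥ : Ideal Λ), ∃ m : M, x = a • m}

/-- `M` is an indecomposable (nonzero) module. -/
def IsIndec : Prop :=
  Nontrivial M ∧ ∀ N₁ N₂ : Submodule Λ M, IsCompl N₁ N₂ → N₁ = ⊥ ∨ N₂ = ⊥

/-- The socle of `M`: the sum of all simple submodules. -/
def socle : Submodule Λ M :=
  sSup {N : Submodule Λ M | IsSimpleModule Λ ↥N}

end ModDefs

/-- `f : P → M` is a projective cover: `P` projective, `f` a superfluous epimorphism. -/
structure IsProjCover {P M : Type} [AddCommGroup P] [Module Λ P] [AddCommGroup M] [Module Λ M]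
    (f : P →ₗ[Λ] M) : Prop where
  proj : Module.Projective Λ P
  surj : Function.Surjective f
  superfluous : ∀ N : Submodule Λ P, N ⊔ LinearMap.ker f = ⊤ → N = ⊤

/-- `0 → A → E → C → 0` (given by `f`, `g`) is an almost split (Auslander–Reiten) sequence. -/
structure IsAlmostSplitSeq {A E C : Type} [AddCommGroup A] [Module Λ A]
    [AddCommGroup E] [Module Λ E] [AddCommGroup C] [Module Λ C]
    (f : A →ₗ[Λ] E) (g : E →ₗ[Λ] C) : Prop where
  inj : Function.Injective f
  surj : Function.Surjective g
  exact : LinearMap.range f = LinearMap.ker g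
  not_split : ¬ ∃ s : C →ₗ[Λ] E, g ∘ₗ s = LinearMap.id
  indecA : IsIndec Λ A
  indecC : IsIndec Λ C
  left_almost : ∀ (X : ModuleCat.{0} Λ) (h : A →ₗ[Λ] ↥X),
    (¬ ∃ r : ↥X →ₗ[Λ] A, r ∘ₗ h = LinearMap.id) → ∃ t : E →ₗ[Λ] ↥X, t ∘ₗ f = h
  right_almost : ∀ (X : ModuleCat.{0} Λ) (h : ↥X →ₗ[Λ] C),
    (¬ ∃ s : C →ₗ[Λ] ↥X, h ∘ₗ s = LinearMap.id) → ∃ t : ↥X →ₗ[Λ] E, g ∘ₗ t = h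

/-- `A` is the Auslander–Reiten translate `τ C` of `C`, witnessed by an almost split
sequence `0 → A → E → C → 0`. -/
def IsARTranslate (A C : Type) [AddCommGroup A] [Module Λ A] [AddCommGroup C] [Module Λ C] :
    Prop :=
  ∃ (E : ModuleCat.{0} Λ) (f : A →ₗ[Λ] ↥E) (g : ↥E →ₗ[Λ] C), IsAlmostSplitSeq Λ f g

/-- `M` is τ-rigid: every homomorphism `M → τ M` vanishes (vacuous if `M` is projective,
in which case `τ M = 0`). -/
def IsTauRigid (M : Type) [AddCommGroup M] [Module Λ M] : Prop :=
  ∀ (K : ModuleCat.{0} Λ), IsARTranslate Λ (↥K) M → ∀ f : M →ₗ[Λ] ↥K, f = 0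

/-- `Q` is (isomorphic to) a direct summand of `P`. -/
def IsDSummand (Q P : Type) [AddCommGroup Q] [Module Λ Q] [AddCommGroup P] [Module Λ P] :
    Prop :=
  ∃ (i : Q →ₗ[Λ] P) (r : P →ₗ[Λ] Q), r ∘ₗ i = LinearMap.id

/-- Every short exact sequence `0 → N → E → M → 0` splits, i.e. `Ext¹(M, N) = 0`. -/
def Ext1Vanishes (M N : Type) [AddCommGroup M] [Module Λ M] [AddCommGroup N] [Module Λ N] :
    Prop :=
  ∀ (E : ModuleCat.{0} Λ) (i : N →ₗ[Λ] ↥E) (p : ↥E →ₗ[Λ] M),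
    Function.Injective i → Function.Surjective p → LinearMap.range i = LinearMap.ker p →
    ∃ s : M →ₗ[Λ] ↥E, p ∘ₗ s = LinearMap.id

/-- Projective dimension at most `n`. -/
def ProjDimLE : ℕ → ModuleCat.{0} Λ → Prop
  | 0, M => Module.Projective Λ ↥M
  | n + 1, M => ∃ (P : ModuleCat.{0} Λ) (f : ↥P →ₗ[Λ] ↥M), Module.Projective Λ ↥P ∧
      Function.Surjective f ∧ ProjDimLE n (ModuleCat.of Λ (LinearMap.ker f))

/-- Injective dimension at most `n`. -/
def InjDimLE : ℕ → ModuleCat.{0} Λ → Prop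
  | 0, M => Module.Injective Λ ↥M
  | n + 1, M => ∃ (I : ModuleCat.{0} Λ) (f : ↥M →ₗ[Λ] ↥I), Module.Injective Λ ↥I ∧
      Function.Injective f ∧ InjDimLE n (ModuleCat.of Λ (↥I ⧸ LinearMap.range f))

/-- `Λ` has finite global dimension. -/
def FiniteGlobalDim : Prop :=
  ∃ n, ∀ M : ModuleCat.{0} Λ, ProjDimLE Λ n M

/-- `Λ` is hereditary: submodules of projective modules are projective. -/
def IsHereditaryAlg : Prop :=
  ∀ (P : ModuleCat.{0} Λ), Module.Projective Λ ↥P → ∀ N : Submodule Λ ↥P, Module.Projective Λ ↥N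

/-- A module is uniserial if its submodules form a chain. -/
def IsUniserial (M : Type) [AddCommGroup M] [Module Λ M] : Prop :=
  ∀ N₁ N₂ : Submodule Λ M, N₁ ≤ N₂ ∨ N₂ ≤ N₁

/-- `Λ` is a Nakayama algebra: indecomposable projective and indecomposable injective
modules are uniserial. -/
def IsNakayamaAlg : Prop :=
  ∀ M : ModuleCat.{0} Λ, IsIndec Λ ↥M →
    (Module.Projective Λ ↥M ∨ Module.Injective Λ ↥M) → IsUniserial Λ ↥M

/-- `Λ` is connected: no nontrivial central idempotents. -/
def IsConnectedAlg : Prop :=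
  ∀ e : Λ, IsIdempotentElem e → e ∈ Subring.center Λ → e = 0 ∨ e = 1

/-- `e` is a primitive idempotent. -/
def IsPrimitiveIdempotent (e : Λ) : Prop :=
  IsIdempotentElem e ∧ e ≠ 0 ∧
    ¬ ∃ e₁ e₂ : Λ, IsIdempotentElem e₁ ∧ IsIdempotentElem e₂ ∧ e₁ ≠ 0 ∧ e₂ ≠ 0 ∧
      e₁ * e₂ = 0 ∧ e₂ * e₁ = 0 ∧ e = e₁ + e₂

/-- `Λ` is basic: distinct orthogonal primitive idempotents give non-isomorphic
indecomposable projectives. -/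
def IsBasicAlg : Prop :=
  ∀ e f : Λ, IsPrimitiveIdempotent Λ e → IsPrimitiveIdempotent Λ f → e * f = 0 → f * e = 0 →
    Nonempty ((Submodule.span Λ ({e} : Set Λ)) ≃ₗ[Λ] (Submodule.span Λ ({f} : Set Λ))) → e = f

end ARPrelude


section ARAux

open LinearMap

variable {Λ : Type} [Ring Λ]

/-- The Jacobson radical kills every simple module. -/
lemma AR_jac_smul_simple {T : Type} [AddCommGroup T] [Module Λ T] [IsSimpleModule Λ T]
    {a : Λ} (ha : a ∈ Ideal.jacobson (⊥ : Ideal Λ)) (t : T) : a • t = 0 := by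
  rcases eq_or_ne t 0 with rfl | ht
  · simp
  · have hmax := IsSimpleModule.ker_toSpanSingleton_isMaximal Λ ht
    have : a ∈ LinearMap.ker (toSpanSingleton Λ T t) := by
      rw [Ideal.jacobson] at ha
      exact (Ideal.mem_sInf.mp ha) ⟨bot_le, hmax⟩
    simpa [toSpanSingleton, LinearMap.mem_ker] using this

/-- The Jacobson radical is a right ideal too. -/
lemma AR_jac_mul_right {a : Λ} (ha : a ∈ Ideal.jacobson (⊥ : Ideal Λ)) (c : Λ) :
    a * c ∈ Ideal.jacobson (⊥ : Ideal Λ) := by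
  rw [Ideal.jacobson]
  refine Ideal.mem_sInf.mpr ?_
  rintro m ⟨-, hm⟩
  haveI : IsSimpleModule Λ (Λ ⧸ m) := (isSimpleModule_iff_isCoatom (m := m)).mpr hm.out
  have h0 : a • (Submodule.Quotient.mk c : Λ ⧸ m) = 0 := AR_jac_smul_simple ha _
  have : (Submodule.Quotient.mk (a * c) : Λ ⧸ m) = 0 := by
    rw [← h0]; rfl
  simpa [Submodule.Quotient.mk_eq_zero] using this

/-- A product of two semisimple modules is semisimple. -/
lemma AR_semisimple_prod {A B : Type} [AddCommGroup A] [Module Λ A] [AddCommGroup B] [Module Λ B]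
    [IsSemisimpleModule Λ A] [IsSemisimpleModule Λ B] : IsSemisimpleModule Λ (A × B) := by
  have hA : IsSemisimpleModule Λ (LinearMap.range (LinearMap.inl Λ A B)) :=
    IsSemisimpleModule.range _
  have hB : IsSemisimpleModule Λ (LinearMap.range (LinearMap.inr Λ A B)) :=
    IsSemisimpleModule.range _
  refine isSemisimpleModule_of_isSemisimpleModule_submodule'
    (p := fun b : Bool => if b then LinearMap.range (LinearMap.inl Λ A B)
      else LinearMap.range (LinearMap.inr Λ A B)) ?_ ?_
  · rintro (_|_) <;> simpa
  · rw [iSup_bool_eq]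
    simpa using (LinearMap.isCompl_range_inl_inr (M := A) (M₂ := B) (R := Λ)).sup_eq_top

/-- Quotient of Λ by the Jacobson radical (as left module) is semisimple, when Λ is artinian. -/
lemma AR_quot_jacobson_semisimple [IsArtinianRing Λ] :
    IsSemisimpleModule Λ (Λ ⧸ (Ideal.jacobson (⊥ : Ideal Λ) : Submodule Λ Λ)) := by
  set J : Ideal Λ := Ideal.jacobson (⊥ : Ideal Λ) with hJ
  set T : Set (Submodule Λ Λ) :=
    {I | J ≤ I ∧ IsSemisimpleModule Λ (Λ ⧸ I)} with hT
  have htop : (⊤ : Submodule Λ Λ) ∈ T := by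
    constructor
    · exact le_top
    · haveI : Subsingleton (Λ ⧸ (⊤ : Submodule Λ Λ)) :=
        Submodule.Quotient.subsingleton_iff.mpr rfl
      refine (isSemisimpleModule_iff Λ _).mpr ⟨?_⟩
      intro a
      exact ⟨⊥, by constructor <;> simp [Subsingleton.elim a ⊤, Subsingleton.elim a ⊥]⟩
  obtain ⟨I₀, hI₀T, hmin⟩ := IsArtinian.set_has_minimal T ⟨⊤, htop⟩
  rcases hI₀T with ⟨hJI₀, hss⟩
  have : I₀ ≤ J := by
    by_contra hcon
    rw [hJ, Ideal.jacobson] at hcon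
    have : ¬ ∀ m ∈ {J : Ideal Λ | ⊥ ≤ J ∧ J.IsMaximal}, I₀ ≤ m := by
      intro hall
      exact hcon (le_sInf hall)
    push_neg at this
    obtain ⟨m, ⟨-, hmmax⟩, hnle⟩ := this
    have hJm : J ≤ m := by
      rw [hJ, Ideal.jacobson]
      exact sInf_le ⟨bot_le, hmmax⟩
    haveI : IsSimpleModule Λ (Λ ⧸ m) :=
      (isSimpleModule_iff_isCoatom (m := (m : Submodule Λ Λ))).mpr hmmax.out
    have hlt : I₀ ⊓ (m : Submodule Λ Λ) < I₀ := lt_of_le_of_ne inf_le_left (by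
      intro he
      exact hnle (he ▸ inf_le_right))
    refine hmin (I₀ ⊓ m) ⟨le_inf hJI₀ hJm, ?_⟩ hlt
    set f : Λ →ₗ[Λ] (Λ ⧸ I₀) × (Λ ⧸ (m : Submodule Λ Λ)) :=
      LinearMap.prod I₀.mkQ (m : Submodule Λ Λ).mkQ with hf
    have hker : LinearMap.ker f = I₀ ⊓ (m : Submodule Λ Λ) := by
      rw [hf, LinearMap.ker_prod, Submodule.ker_mkQ, Submodule.ker_mkQ]
    haveI : IsSemisimpleModule Λ ((Λ ⧸ I₀) × (Λ ⧸ (m : Submodule Λ Λ))) := AR_semisimple_prod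
    have e : (Λ ⧸ (I₀ ⊓ (m : Submodule Λ Λ))) ≃ₗ[Λ] LinearMap.range f := by
      rw [← hker]
      exact f.quotKerEquivRange
    exact IsSemisimpleModule.congr e
  have : I₀ = J := le_antisymm this hJI₀
  rw [← this]
  exact hss

/-- Any module killed by the Jacobson radical over an artinian ring is semisimple. -/
lemma AR_semisimple_of_jac_killed [IsArtinianRing Λ] {M : Type} [AddCommGroup M] [Module Λ M]
    (hM : ∀ a ∈ Ideal.jacobson (⊥ : Ideal Λ), ∀ m : M, a • m = 0) :
    IsSemisimpleModule Λ M := by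
  set J : Ideal Λ := Ideal.jacobson (⊥ : Ideal Λ) with hJ
  haveI := AR_quot_jacobson_semisimple (Λ := Λ)
  refine isSemisimpleModule_of_isSemisimpleModule_submodule'
    (ι := M) (p := fun x => Submodule.span Λ {x}) ?_ ?_
  · intro x
    have hle : (J : Submodule Λ Λ) ≤ LinearMap.ker (toSpanSingleton Λ M x) := by
      intro a ha
      simpa [LinearMap.mem_ker, toSpanSingleton] using hM a ha x
    set g : (Λ ⧸ (J : Submodule Λ Λ)) →ₗ[Λ] M :=
      Submodule.liftQ _ (toSpanSingleton Λ M x) hle with hg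
    have hrange : LinearMap.range g = Submodule.span Λ {x} := by
      rw [hg, Submodule.range_liftQ, span_singleton_eq_range]
    have hss : IsSemisimpleModule Λ (LinearMap.range g) := IsSemisimpleModule.range g
    rw [hrange] at hss
    exact hss
  · rw [eq_top_iff]
    intro x _
    exact Submodule.mem_iSup_of_mem x (Submodule.mem_span_singleton_self x)

/-- Splitting of surjections out of a semisimple module. -/
lemma AR_split_of_semisimple {M N : Type} [AddCommGroup M] [Module Λ M] [AddCommGroup N]
    [Module Λ N] [IsSemisimpleModule Λ M] (g : M →ₗ[Λ] N) (hg : Function.Surjective g) :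
    ∃ s : N →ₗ[Λ] M, g ∘ₗ s = LinearMap.id := by
  obtain ⟨C, hC⟩ := exists_isCompl (LinearMap.ker g)
  set gC : ↥C →ₗ[Λ] N := g ∘ₗ C.subtype with hgC
  have hinj : Function.Injective gC := by
    rw [← LinearMap.ker_eq_bot]
    rw [Submodule.eq_bot_iff]
    rintro ⟨x, hxC⟩ hx
    have hxk : x ∈ LinearMap.ker g := by simpa [hgC] using hx
    have : x ∈ LinearMap.ker g ⊓ C := ⟨hxk, hxC⟩
    rw [hC.inf_eq_bot] at this
    exact Subtype.ext (by simpa using this)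
  have hsurj : Function.Surjective gC := by
    intro n
    obtain ⟨m, rfl⟩ := hg n
    have : m ∈ LinearMap.ker g ⊔ C := by rw [hC.sup_eq_top]; trivial
    obtain ⟨k, hk, c, hc, rfl⟩ := Submodule.mem_sup.mp this
    exact ⟨⟨c, hc⟩, by simp [hgC, LinearMap.mem_ker.mp hk]⟩
  set e := LinearEquiv.ofBijective gC ⟨hinj, hsurj⟩
  refine ⟨C.subtype ∘ₗ (e.symm : N →ₗ[Λ] ↥C), ?_⟩
  ext n
  have : gC (e.symm n) = n := e.apply_symm_apply n
  simpa [hgC] using this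

/-- The radical submodule is killed by the Jacobson radical, when `r² = 0`. -/
lemma AR_radSub_killed (hr2 : RadicalSquareZero Λ) {M : Type} [AddCommGroup M] [Module Λ M] :
    ∀ x ∈ radSub Λ M, ∀ a ∈ Ideal.jacobson (⊥ : Ideal Λ), a • x = 0 := by
  intro x hx
  rw [radSub] at hx
  refine Submodule.span_induction ?_ ?_ ?_ ?_ hx
  · rintro y ⟨b, hb, m, rfl⟩ a ha
    rw [smul_smul, hr2 a ha b hb, zero_smul]
  · intro a _; rw [smul_zero]
  · intro y z _ _ h1 h2 a ha
    rw [smul_add, h1 a ha, h2 a ha, add_zero]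
  · intro c y _ h1 a ha
    rw [smul_smul]
    exact h1 (a * c) (AR_jac_mul_right ha c)

lemma AR_pd_iso (n : ℕ) : ∀ {A B : Type} [AddCommGroup A] [Module Λ A] [AddCommGroup B]
    [Module Λ B], (A ≃ₗ[Λ] B) →
    ProjDimLE Λ n (ModuleCat.of Λ A) → ProjDimLE Λ n (ModuleCat.of Λ B) := by
  induction n with
  | zero =>
    intro A B _ _ _ _ e h
    have h' : Module.Projective Λ A := h
    exact Module.Projective.of_equiv e
  | succ n ih =>
    intro A B _ _ _ _ e h
    obtain ⟨P, f, hP, hf, hker⟩ := h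
    refine ⟨P, e.toLinearMap ∘ₗ f, hP, ?_, ?_⟩
    · exact e.surjective.comp hf
    · have hk : LinearMap.ker (e.toLinearMap ∘ₗ f) = LinearMap.ker f := by
        rw [LinearMap.ker_comp, LinearEquiv.ker, Submodule.comap_bot]
      rw [hk]
      exact hker

lemma AR_pd_addproj (n : ℕ) : ∀ {A Q : Type} [AddCommGroup A] [Module Λ A] [AddCommGroup Q]
    [Module Λ Q], Module.Projective Λ Q →
    ProjDimLE Λ n (ModuleCat.of Λ A) → ProjDimLE Λ n (ModuleCat.of Λ (A × Q)) := by
  induction n with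
  | zero =>
    intro A Q _ _ _ _ hQ h
    have h' : Module.Projective Λ A := h
    have : Module.Projective Λ (A × Q) := by
      haveI := h'; haveI := hQ; infer_instance
    exact this
  | succ n ih =>
    intro A Q _ _ _ _ hQ h
    obtain ⟨P, f, hP, hf, hker⟩ := h
    refine ⟨ModuleCat.of Λ (↥P × Q), f.prodMap (LinearMap.id : Q →ₗ[Λ] Q), ?_, ?_, ?_⟩
    · haveI := hP; haveI := hQ
      exact inferInstanceAs (Module.Projective Λ (↥P × Q))
    · intro y
      obtain ⟨x, hx⟩ := hf y.1
      refine ⟨(x, y.2), ?_⟩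
      show (f x, y.2) = y
      rw [hx]
    · have hk : LinearMap.ker (f.prodMap (LinearMap.id : Q →ₗ[Λ] Q))
          = (LinearMap.ker f).prod (⊥ : Submodule Λ Q) := by
        rw [LinearMap.ker_prodMap, LinearMap.ker_id]
      have e : ↥(LinearMap.ker f) ≃ₗ[Λ]
          ↥(LinearMap.ker (f.prodMap (LinearMap.id : Q →ₗ[Λ] Q))) := by
        rw [hk]
        exact
          { toFun := fun x => ⟨(x.1, 0), ⟨x.2, rfl⟩⟩
            map_add' := fun x y => by ext <;> simp
            map_smul' := fun c x => by ext <;> simp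
            invFun := fun x => ⟨x.1.1, x.2.1⟩
            left_inv := fun x => rfl
            right_inv := fun x => by
              ext
              · rfl
              · exact (x.2.2).symm }
      exact AR_pd_iso n e hker

lemma AR_pd_summand (n : ℕ) : ∀ (K : ModuleCat.{0} Λ) {S' : Type} [AddCommGroup S']
    [Module Λ S'] (i : S' →ₗ[Λ] ↥K) (ρ : ↥K →ₗ[Λ] S'), ρ ∘ₗ i = LinearMap.id →
    ProjDimLE Λ n K → ProjDimLE Λ n (ModuleCat.of Λ S') := by
  induction n with
  | zero =>
    intro K S' _ _ i ρ hri h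
    have h' : Module.Projective Λ ↥K := h
    exact Module.Projective.of_split i ρ hri
  | succ n ih =>
    intro K S' _ _ i ρ hri h
    obtain ⟨P, π, hP, hπ, hker⟩ := h
    have hρi : ∀ x : S', ρ (i x) = x := fun x => congrArg (fun g => g x) hri
    set σ : ↥K →ₗ[Λ] ↥K := i ∘ₗ ρ with hσ
    set π₂ : ↥P →ₗ[Λ] S' := ρ ∘ₗ π with hπ₂
    set K₂ : Submodule Λ ↥P := LinearMap.ker π₂ with hK₂
    set K₃ : Submodule Λ ↥P := LinearMap.ker ((LinearMap.id - σ) ∘ₗ π) with hK₃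
    set θ : (↥K₂ × ↥K₃) →ₗ[Λ] ↥P :=
      K₂.subtype ∘ₗ LinearMap.fst Λ ↥K₂ ↥K₃ + K₃.subtype ∘ₗ LinearMap.snd Λ ↥K₂ ↥K₃ with hθ
    have hθapp : ∀ x : ↥K₂ × ↥K₃, θ x = (x.1 : ↥P) + (x.2 : ↥P) := fun x => rfl
    have hσσ : ∀ x : ↥K, σ (σ x) = σ x := by intro x; simp [hσ, hρi]
    have hθsurj : Function.Surjective θ := by
      intro a
      obtain ⟨c, hc⟩ := hπ (σ (π a))
      have hcK₃ : c ∈ K₃ := by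
        rw [hK₃, LinearMap.mem_ker]
        show π c - σ (π c) = 0
        rw [hc, hσσ, sub_self]
      have hbK₂ : a - c ∈ K₂ := by
        rw [hK₂, LinearMap.mem_ker]
        show ρ (π (a - c)) = 0
        rw [map_sub, map_sub, hc]
        simp [hσ, hρi]
      refine ⟨(⟨a - c, hbK₂⟩, ⟨c, hcK₃⟩), ?_⟩
      rw [hθapp]
      show a - c + c = a
      abel
    have hkermem : ∀ x : ↥K₂ × ↥K₃, ((x.1 : ↥P) + (x.2 : ↥P) = 0) →
        (x.1 : ↥P) ∈ LinearMap.ker π := by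
      rintro ⟨⟨b, hb⟩, ⟨c, hc⟩⟩ hsum
      rw [hK₂] at hb
      rw [hK₃] at hc
      rw [LinearMap.mem_ker] at hb hc ⊢
      have hb2 : ρ (π b) = 0 := hb
      have hc2 : π c - σ (π c) = 0 := hc
      have hbc : b = -c := eq_neg_of_add_eq_zero_left hsum
      have hπbc : π b = -(π c) := by rw [hbc, map_neg]
      have h2 : ρ (π c) = 0 := by
        have h5 : ρ (π b) = -(ρ (π c)) := by rw [hπbc, map_neg]
        rw [hb2] at h5
        exact neg_eq_zero.mp h5.symm
      have h3 : σ (π c) = 0 := by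
        rw [hσ]
        show i (ρ (π c)) = 0
        rw [h2, map_zero]
      have h4 : π c = 0 := by
        rw [sub_eq_zero] at hc2
        rw [hc2, h3]
      rw [hπbc, h4, neg_zero]
    set w₁ : ↥(LinearMap.ker θ) →ₗ[Λ] ↥(LinearMap.ker π) :=
      LinearMap.codRestrict (LinearMap.ker π)
        (K₂.subtype ∘ₗ LinearMap.fst Λ ↥K₂ ↥K₃ ∘ₗ (LinearMap.ker θ).subtype)
        (fun x => hkermem x.1 x.2) with hw₁
    have hmem₂ : ∀ x : ↥(LinearMap.ker π), (x : ↥P) ∈ K₂ := by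
      intro x
      rw [hK₂, LinearMap.mem_ker]
      show ρ (π (x : ↥P)) = 0
      rw [LinearMap.mem_ker.mp x.2, map_zero]
    have hmem₃ : ∀ x : ↥(LinearMap.ker π), (-(x : ↥P)) ∈ K₃ := by
      intro x
      rw [hK₃, LinearMap.mem_ker]
      show π (-(x : ↥P)) - σ (π (-(x : ↥P))) = 0
      rw [map_neg, LinearMap.mem_ker.mp x.2]
      simp
    set w₂ : ↥(LinearMap.ker π) →ₗ[Λ] ↥(LinearMap.ker θ) :=
      LinearMap.codRestrict (LinearMap.ker θ)
        (LinearMap.prod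
          (LinearMap.codRestrict K₂ (LinearMap.ker π).subtype (fun x => hmem₂ x))
          (LinearMap.codRestrict K₃ (-(LinearMap.ker π).subtype) (fun x => hmem₃ x)))
        (fun x => by
          rw [LinearMap.mem_ker, hθapp]
          show (x : ↥P) + (-(x : ↥P)) = 0
          exact add_neg_cancel _) with hw₂
    have e₁ : ↥(LinearMap.ker θ) ≃ₗ[Λ] ↥(LinearMap.ker π) := by
      refine LinearEquiv.ofLinear w₁ w₂ (LinearMap.ext fun x => Subtype.ext rfl)
        (LinearMap.ext fun x => ?_)
      have hsum : ((x : ↥K₂ × ↥K₃).1 : ↥P) + ((x : ↥K₂ × ↥K₃).2 : ↥P) = 0 := x.2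
      refine Subtype.ext (Prod.ext (Subtype.ext rfl) (Subtype.ext ?_))
      show -(((x : ↥K₂ × ↥K₃).1 : ↥P)) = ((x : ↥K₂ × ↥K₃).2 : ↥P)
      exact neg_eq_of_add_eq_zero_right hsum
    haveI := hP
    obtain ⟨s, hs⟩ := Module.projective_lifting_property θ LinearMap.id hθsurj
    have hsapp : ∀ a : ↥P, θ (s a) = a := fun a => congrArg (fun g => g a) hs
    have hmemker : ∀ x : ↥K₂ × ↥K₃, x - s (θ x) ∈ LinearMap.ker θ := by
      intro x
      rw [LinearMap.mem_ker]
      rw [map_sub, hsapp, sub_self]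
    set v₁ : (↥K₂ × ↥K₃) →ₗ[Λ] (↥(LinearMap.ker θ) × ↥P) :=
      LinearMap.prod
        (LinearMap.codRestrict (LinearMap.ker θ) (LinearMap.id - s ∘ₗ θ)
          (fun x => hmemker x)) θ with hv₁
    set v₂ : (↥(LinearMap.ker θ) × ↥P) →ₗ[Λ] (↥K₂ × ↥K₃) :=
      (LinearMap.ker θ).subtype ∘ₗ LinearMap.fst Λ _ _ + s ∘ₗ LinearMap.snd Λ _ _ with hv₂
    have u : (↥(LinearMap.ker θ) × ↥P) ≃ₗ[Λ] (↥K₂ × ↥K₃) := by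
      refine LinearEquiv.ofLinear v₂ v₁ (LinearMap.ext fun x => ?_) (LinearMap.ext fun y => ?_)
      · show (x - s (θ x)) + s (θ x) = x
        abel
      · have h0 : θ ((y.1 : ↥K₂ × ↥K₃)) = 0 := y.1.2
        have hv2app : v₂ y = (y.1 : ↥K₂ × ↥K₃) + s y.2 := rfl
        refine Prod.ext (Subtype.ext ?_) ?_
        · show (v₂ y) - s (θ (v₂ y)) = ((y.1 : ↥K₂ × ↥K₃) : ↥K₂ × ↥K₃)
          rw [hv2app, map_add, h0, zero_add, hsapp, add_sub_cancel_right]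
        · show θ (v₂ y) = y.2
          rw [hv2app, map_add, h0, zero_add, hsapp]
    have hpd23 : ProjDimLE Λ n (ModuleCat.of Λ (↥K₂ × ↥K₃)) := by
      have h1 : ProjDimLE Λ n (ModuleCat.of Λ (↥(LinearMap.ker π) × ↥P)) :=
        AR_pd_addproj n hP hker
      have E : (↥(LinearMap.ker π) × ↥P) ≃ₗ[Λ] (↥K₂ × ↥K₃) :=
        (LinearEquiv.prodCongr e₁.symm (LinearEquiv.refl Λ ↥P)).trans u
      exact AR_pd_iso n E h1
    have hpdK₂ : ProjDimLE Λ n (ModuleCat.of Λ ↥K₂) :=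
      ih (ModuleCat.of Λ (↥K₂ × ↥K₃)) (LinearMap.inl Λ ↥K₂ ↥K₃) (LinearMap.fst Λ ↥K₂ ↥K₃)
        (by ext x; rfl) hpd23
    refine ⟨P, π₂, hP, ?_, ?_⟩
    · intro y
      obtain ⟨x, hx⟩ := hπ (i y)
      refine ⟨x, ?_⟩
      show ρ (π x) = y
      rw [hx]
      exact hρi y
    · exact hpdK₂

end ARAux

/-- Over an Artin algebra with radical square zero, a simple module of
finite projective dimension has `Ext¹(S, S) = 0` (all self-extensions split). -/
theorem simple_finite_projdim_ext_vanishes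
    (Λ : Type) [Ring Λ] [IsArtinianRing Λ] (hr2 : RadicalSquareZero Λ)
    (S : Type) [AddCommGroup S] [Module Λ S] [Module.Finite Λ S]
    (hS : IsSimpleModule Λ S)
    (hpd : ∃ n, ProjDimLE Λ n (ModuleCat.of Λ S)) :
    Ext1Vanishes Λ S S := by
  haveI := hS
  intro E i p hi hp hexact
  by_contra hns
  set J : Ideal Λ := Ideal.jacobson (⊥ : Ideal Λ) with hJ
  have hJS : ∀ a ∈ J, ∀ s : S, a • s = 0 := fun a ha s => AR_jac_smul_simple ha s
  have hkerp : LinearMap.ker p = LinearMap.range i := hexact.symm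
  have hrE_le : radSub Λ ↥E ≤ LinearMap.range i := by
    rw [← hkerp, radSub]
    refine Submodule.span_le.mpr ?_
    rintro x ⟨a, ha, m, rfl⟩
    rw [SetLike.mem_coe, LinearMap.mem_ker, map_smul, hJS a ha]
  rcases eq_bot_or_eq_top (Submodule.comap i (radSub Λ ↥E)) with hbot | htop
  · -- radical of E is zero: E is semisimple and p splits, contradiction
    have hrE0 : radSub Λ ↥E = ⊥ := by
      rw [← Submodule.map_comap_eq_of_le hrE_le, hbot, Submodule.map_bot]
    have hkill : ∀ a ∈ J, ∀ e : ↥E, a • e = 0 := by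
      intro a ha e
      have hmem : a • e ∈ radSub Λ ↥E := Submodule.subset_span ⟨a, ha, e, rfl⟩
      rw [hrE0] at hmem
      simpa using hmem
    haveI := AR_semisimple_of_jac_killed hkill
    exact hns (AR_split_of_semisimple p hp)
  · have hre : radSub Λ ↥E = LinearMap.range i := by
      rw [← Submodule.map_comap_eq_of_le hrE_le, htop, Submodule.map_top]
    obtain ⟨n, hn⟩ := hpd
    have key : ∀ m, ProjDimLE Λ m (ModuleCat.of Λ S) → False := by
      intro m
      induction m with
      | zero =>
        intro h0
        haveI : Module.Projective Λ S := h0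
        exact hns (Module.projective_lifting_property p LinearMap.id hp)
      | succ m ihm =>
        rintro ⟨P, π₀, hP, hπ₀, hker₀⟩
        haveI := hP
        set π : ↥P →ₗ[Λ] S := (LinearMap.id : S →ₗ[Λ] S) ∘ₗ π₀ with hπdef
        have hπ : Function.Surjective π := fun y => hπ₀ y
        have hkerEq : LinearMap.ker π = LinearMap.ker π₀ := by
          rw [hπdef, LinearMap.ker_comp, LinearMap.ker_id, Submodule.comap_bot]
        have hker : ProjDimLE Λ m (ModuleCat.of Λ ↥(LinearMap.ker π)) := by
          rw [hkerEq]; exact hker₀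
        obtain ⟨φ, hφ⟩ := Module.projective_lifting_property p π hp
        have hφapp : ∀ x, p (φ x) = π x := fun x => congrArg (fun g => g x) hφ
        have hrPle : radSub Λ ↥P ≤ LinearMap.ker π := by
          rw [radSub]
          refine Submodule.span_le.mpr ?_
          rintro x ⟨a, ha, u, rfl⟩
          rw [SetLike.mem_coe, LinearMap.mem_ker, map_smul, hJS a ha]
        have hdecomp : ∀ e : ↥E, ∃ u : ↥P, ∃ s0 : S, e = φ u + i s0 := by
          intro e
          obtain ⟨u, hu⟩ := hπ (p e)
          have hsub : e - φ u ∈ LinearMap.ker p := by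
            rw [LinearMap.mem_ker, map_sub, hφapp, hu, sub_self]
          rw [hkerp] at hsub
          obtain ⟨s0, hs0⟩ := hsub
          exact ⟨u, s0, by rw [hs0]; abel⟩
        have hrange_le : LinearMap.range i ≤ Submodule.map φ (radSub Λ ↥P) := by
          rw [← hre, radSub]
          refine Submodule.span_le.mpr ?_
          rintro x ⟨a, ha, e, rfl⟩
          obtain ⟨u, s0, rfl⟩ := hdecomp e
          have heq : a • (φ u + i s0) = φ (a • u) := by
            rw [smul_add, ← map_smul, ← map_smul i, hJS a ha s0, map_zero, add_zero]
          rw [SetLike.mem_coe, heq]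
          exact Submodule.mem_map_of_mem (Submodule.subset_span ⟨a, ha, u, rfl⟩)
        have hφK : ∀ x : ↥(LinearMap.ker π), φ (x : ↥P) ∈ LinearMap.range i := by
          intro x
          rw [← hkerp, LinearMap.mem_ker, hφapp]
          exact LinearMap.mem_ker.mp x.2
        set e_i : S ≃ₗ[Λ] ↥(LinearMap.range i) := LinearEquiv.ofInjective i hi with he_i
        set ρK : ↥(LinearMap.ker π) →ₗ[Λ] S :=
          (e_i.symm : ↥(LinearMap.range i) →ₗ[Λ] S) ∘ₗ
            LinearMap.codRestrict (LinearMap.range i) (φ ∘ₗ (LinearMap.ker π).subtype)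
              (fun x => hφK x) with hρK
        have hρKval : ∀ z : ↥(LinearMap.ker π), i (ρK z) = φ (z : ↥P) := by
          intro z
          set w := LinearMap.codRestrict (LinearMap.range i) (φ ∘ₗ (LinearMap.ker π).subtype)
            (fun x => hφK x) z with hw
          have h2 : e_i (ρK z) = w := by
            rw [hρK]
            simp only [LinearMap.comp_apply, LinearEquiv.coe_coe]
            exact e_i.apply_symm_apply w
          have h3 : ((e_i (ρK z) : ↥(LinearMap.range i)) : ↥E) = i (ρK z) :=
            LinearEquiv.ofInjective_apply (f := i) (h := hi) _
          rw [← h3, h2]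
          rfl
        have hrPkill : ∀ x ∈ radSub Λ ↥P, ∀ a ∈ J, a • x = 0 := AR_radSub_killed hr2
        have hkill2 : ∀ a ∈ J, ∀ x : ↥(radSub Λ ↥P), a • x = 0 := by
          intro a ha x
          exact Subtype.ext (by
            show a • (x : ↥P) = 0
            exact hrPkill x.1 x.2 a ha)
        haveI := AR_semisimple_of_jac_killed hkill2
        set g₁ : ↥(radSub Λ ↥P) →ₗ[Λ] S := ρK ∘ₗ Submodule.inclusion hrPle with hg₁
        have hg₁surj : Function.Surjective g₁ := by
          intro s0
          obtain ⟨x, hxrP, hxeq⟩ := hrange_le ⟨s0, rfl⟩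
          refine ⟨⟨x, hxrP⟩, hi ?_⟩
          rw [hg₁, LinearMap.comp_apply, hρKval]
          exact hxeq
        obtain ⟨s₁, hs₁⟩ := AR_split_of_semisimple g₁ hg₁surj
        have hcomp : ρK ∘ₗ (Submodule.inclusion hrPle ∘ₗ s₁) = LinearMap.id := by
          rw [← LinearMap.comp_assoc, ← hg₁]
          exact hs₁
        exact ihm (AR_pd_summand m (ModuleCat.of Λ ↥(LinearMap.ker π))
          (Submodule.inclusion hrPle ∘ₗ s₁) ρK hcomp hker)
    exact key n hn
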